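/- arXiv:1910.12568 — 3 statements merged into one kernel-verified Lean document; each statement's English description precedes it below -/
import Mathlib

section
/- Let φ : ℝ² → ℝ be a C² function and let p be a nondegenerate critical point of φ. The Hessian map Hess_p φ : ℝ² → ℝ², x ↦ (Hess_p φ)·x, is a proper gradient map, and it is proper gradient homotopic to id_{ℝ²} if the Hessian of φ at p is positive definite, and proper gradient homotopic to −id_{ℝ²} if the Hessian of φ at p is negative definite. -/
open Set Metric Filter

noncomputable section

/-- Euclidean space `ℝⁿ`. -/
abbrev Euc (n : ℕ) := EuclideanSpace ℝ (Fin n)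

/-- A map `f : ℝⁿ → ℝⁿ` is gradient if it is the gradient of a `C¹` function `φ : ℝⁿ → ℝ`. -/
def IsGradient {n : ℕ} (f : Euc n → Euc n) : Prop :=
  ∃ φ : Euc n → ℝ, ContDiff ℝ 1 φ ∧ ∀ x, gradient φ x = f x

/-- A map is proper if preimages of compact sets are compact (our maps are continuous anyway). -/
def IsProper {n : ℕ} (f : Euc n → Euc n) : Prop :=
  ∀ K : Set (Euc n), IsCompact K → IsCompact (f ⁻¹' K)

/-- `h : [0,1] × ℝⁿ → ℝⁿ` is a gradient homotopy: it is continuous, each `h t` is a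
gradient map, and the zero set `h⁻¹(0)` (within `[0,1] × ℝⁿ`) is compact. -/
def IsGradientHomotopy {n : ℕ} (h : ℝ → Euc n → Euc n) : Prop :=
  ContinuousOn (fun p : ℝ × Euc n => h p.1 p.2) (Icc 0 1 ×ˢ univ) ∧
  (∀ t ∈ Icc (0:ℝ) 1, IsGradient (h t)) ∧
  IsCompact {p : ℝ × Euc n | p.1 ∈ Icc (0:ℝ) 1 ∧ h p.1 p.2 = 0}

/-- Two maps are gradient homotopic if some gradient homotopy connects them. -/
def GradientHomotopic {n : ℕ} (f g : Euc n → Euc n) : Prop :=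
  ∃ h : ℝ → Euc n → Euc n, IsGradientHomotopy h ∧ h 0 = f ∧ h 1 = g

/-- `h : [0,1] × ℝⁿ → ℝⁿ` is a proper gradient homotopy: it is continuous, each `h t` is a
gradient map, and `h` is proper as a map on `[0,1] × ℝⁿ`. -/
def IsProperGradientHomotopy {n : ℕ} (h : ℝ → Euc n → Euc n) : Prop :=
  ContinuousOn (fun p : ℝ × Euc n => h p.1 p.2) (Icc 0 1 ×ˢ univ) ∧
  (∀ t ∈ Icc (0:ℝ) 1, IsGradient (h t)) ∧
  (∀ K : Set (Euc n), IsCompact K →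
    IsCompact {p : ℝ × Euc n | p.1 ∈ Icc (0:ℝ) 1 ∧ h p.1 p.2 ∈ K})

/-- Two maps are proper gradient homotopic if some proper gradient homotopy connects them. -/
def ProperGradientHomotopic {n : ℕ} (f g : Euc n → Euc n) : Prop :=
  ∃ h : ℝ → Euc n → Euc n, IsProperGradientHomotopy h ∧ h 0 = f ∧ h 1 = g

open scoped RealInnerProductSpace

/-- The quadratic form of a symmetric continuous linear map has gradient `A x`. -/
lemma hasGradientAt_quad (A : Euc 2 →L[ℝ] Euc 2)
    (hA : ∀ u v, ⟪A u, v⟫ = ⟪u, A v⟫) (x : Euc 2) :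
    HasGradientAt (fun y => ⟪A y, y⟫ / 2) (A x) x := by
  have h2 := (A.hasFDerivAt (x := x)).inner ℝ (hasFDerivAt_id x)
  have h3 : HasFDerivAt (fun y => ⟪A y, y⟫ / 2)
      ((2:ℝ)⁻¹ • ((fderivInnerCLM ℝ (A x, x)).comp
        (A.prod (ContinuousLinearMap.id ℝ (Euc 2))))) x := by
    simpa [div_eq_inv_mul, Pi.smul_def, smul_eq_mul] using h2.const_smul ((2:ℝ)⁻¹)
  rw [hasGradientAt_iff_hasFDerivAt]
  refine h3.congr_fderiv (Eq.symm ?_)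
  refine ContinuousLinearMap.ext fun v => ?_
  have key : ⟪A v, x⟫ = ⟪A x, v⟫ := by rw [hA v x, real_inner_comm]
  show InnerProductSpace.toDual ℝ (Euc 2) (A x) v = _
  rw [InnerProductSpace.toDual_apply_apply]
  simp only [ContinuousLinearMap.smul_apply, ContinuousLinearMap.comp_apply,
    ContinuousLinearMap.prod_apply, ContinuousLinearMap.coe_id', id_eq,
    fderivInnerCLM_apply, key, smul_eq_mul]
  ring

/-- A symmetric continuous linear map is a gradient map. -/
lemma isGradient_clm (A : Euc 2 →L[ℝ] Euc 2)
    (hA : ∀ u v, ⟪A u, v⟫ = ⟪u, A v⟫) : IsGradient (fun x => A x) := by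
  refine ⟨fun y => ⟪A y, y⟫ / 2, ?_, fun x => (hasGradientAt_quad A hA x).gradient⟩
  exact ((A.contDiff.inner ℝ contDiff_id).div_const 2)

/-- Coercivity of a positive definite continuous linear map on `ℝ²`. -/
lemma coercive (A : Euc 2 →L[ℝ] Euc 2) (hA : ∀ v : Euc 2, v ≠ 0 → 0 < ⟪A v, v⟫) :
    ∃ c > 0, ∀ x : Euc 2, c * ‖x‖ ^ 2 ≤ ⟪A x, x⟫ := by
  have hsc : IsCompact (sphere (0 : Euc 2) 1) := isCompact_sphere 0 1
  have hsne : (sphere (0 : Euc 2) 1).Nonempty :=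
    ⟨EuclideanSpace.single 0 1, by simp [EuclideanSpace.norm_single]⟩
  have hcont : ContinuousOn (fun x : Euc 2 => ⟪A x, x⟫) (sphere 0 1) :=
    (A.continuous.inner continuous_id).continuousOn
  obtain ⟨x₀, hx₀s, hmin⟩ := hsc.exists_isMinOn hsne hcont
  have hx₀ : x₀ ≠ 0 := by
    intro h; rw [mem_sphere_zero_iff_norm, h, norm_zero] at hx₀s; norm_num at hx₀s
  refine ⟨⟪A x₀, x₀⟫, hA x₀ hx₀, fun x => ?_⟩
  rcases eq_or_ne x 0 with rfl | hx
  · simp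
  · have hnx : (0:ℝ) < ‖x‖ := norm_pos_iff.2 hx
    set u : Euc 2 := ‖x‖⁻¹ • x with hu
    have hus : u ∈ sphere (0 : Euc 2) 1 := by
      simp [hu, norm_smul, abs_of_pos (inv_pos.2 hnx), inv_mul_cancel₀ hnx.ne']
    have h1 := hmin hus
    have h2 : ⟪A u, u⟫ = ‖x‖⁻¹ ^ 2 * ⟪A x, x⟫ := by
      simp [hu, real_inner_smul_left, real_inner_smul_right, map_smul]; ring
    calc ⟪A x₀, x₀⟫ * ‖x‖ ^ 2 = ‖x‖ ^ 2 * ⟪A x₀, x₀⟫ := by ring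
      _ ≤ ‖x‖ ^ 2 * ⟪A u, u⟫ := mul_le_mul_of_nonneg_left h1 (sq_nonneg ‖x‖)
      _ = ⟪A x, x⟫ := by rw [h2]; field_simp

/-- Symmetry of the Hessian of a `C²` function. -/
lemma hess_symm (φ : Euc 2 → ℝ) (p : Euc 2) (hφ : ContDiff ℝ 2 φ) :
    ∀ u v, ⟪fderiv ℝ (gradient φ) p u, v⟫ = ⟪u, fderiv ℝ (gradient φ) p v⟫ := by
  have hsymm : IsSymmSndFDerivAt ℝ φ p :=
    (hφ.contDiffAt).isSymmSndFDerivAt (by norm_num)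
  set e : StrongDual ℝ (Euc 2) ≃ₗᵢ[ℝ] Euc 2 :=
    (InnerProductSpace.toDual ℝ (Euc 2)).symm with he
  have hgr : gradient φ = e ∘ fderiv ℝ φ := rfl
  have hfd : fderiv ℝ (gradient φ) p =
      (e : StrongDual ℝ (Euc 2) →L[ℝ] Euc 2).comp (fderiv ℝ (fderiv ℝ φ) p) := by
    rw [hgr]; exact e.comp_fderiv
  intro u v
  rw [hfd]
  simp only [ContinuousLinearMap.comp_apply, LinearIsometryEquiv.coe_coe'']
  have happ : ∀ (ℓ : StrongDual ℝ (Euc 2)) (w : Euc 2), ⟪e ℓ, w⟫ = ℓ w := fun ℓ w =>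
    InnerProductSpace.toDual_symm_apply
  rw [happ, real_inner_comm, happ]
  exact hsymm u v

/-- A map bounded below on a slab is proper on the slab. -/
lemma proper_slab (g : ℝ → Euc 2 → Euc 2)
    (hcont : Continuous (fun p : ℝ × Euc 2 => g p.1 p.2))
    (c : ℝ) (hc : 0 < c) (hbound : ∀ t ∈ Icc (0:ℝ) 1, ∀ x, c * ‖x‖ ≤ ‖g t x‖) :
    ∀ K : Set (Euc 2), IsCompact K →
      IsCompact {p : ℝ × Euc 2 | p.1 ∈ Icc (0:ℝ) 1 ∧ g p.1 p.2 ∈ K} := by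
  intro K hK
  obtain ⟨R, hR⟩ := hK.isBounded.subset_closedBall 0
  have hsub : {p : ℝ × Euc 2 | p.1 ∈ Icc (0:ℝ) 1 ∧ g p.1 p.2 ∈ K} ⊆
      (Icc (0:ℝ) 1) ×ˢ closedBall (0 : Euc 2) (R / c) := by
    rintro ⟨t, x⟩ ⟨ht, hx⟩
    refine ⟨ht, ?_⟩
    have h1 : c * ‖x‖ ≤ R := le_trans (hbound t ht x) (by simpa using hR hx)
    simp only [mem_closedBall, dist_zero_right]
    rw [le_div_iff₀ hc, mul_comm]; exact h1
  have hclosed : IsClosed {p : ℝ × Euc 2 | p.1 ∈ Icc (0:ℝ) 1 ∧ g p.1 p.2 ∈ K} := by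
    have : {p : ℝ × Euc 2 | p.1 ∈ Icc (0:ℝ) 1 ∧ g p.1 p.2 ∈ K} =
        (Prod.fst ⁻¹' Icc (0:ℝ) 1) ∩ ((fun p : ℝ × Euc 2 => g p.1 p.2) ⁻¹' K) := rfl
    rw [this]
    exact (isClosed_Icc.preimage continuous_fst).inter (hK.isClosed.preimage hcont)
  exact ((isCompact_Icc.prod (isCompact_closedBall _ _)).of_isClosed_subset hclosed hsub)

/-- The linear homotopy between two symmetric maps whose convex combinations are
uniformly definite is a proper gradient homotopy. -/
lemma homotopy_symm (A B : Euc 2 →L[ℝ] Euc 2)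
    (hA : ∀ u v, ⟪A u, v⟫ = ⟪u, A v⟫) (hB : ∀ u v, ⟪B u, v⟫ = ⟪u, B v⟫)
    (c : ℝ) (hc : 0 < c)
    (hlow : ∀ t ∈ Icc (0:ℝ) 1, ∀ x : Euc 2,
      c * ‖x‖ ^ 2 ≤ |⟪(1-t) • A x + t • B x, x⟫|) :
    ProperGradientHomotopic (fun x => A x) (fun x => B x) := by
  refine ⟨fun t x => (1-t) • A x + t • B x, ⟨?_, ?_, ?_⟩, ?_, ?_⟩
  · exact (((continuous_const.sub continuous_fst).smul
      (A.continuous.comp continuous_snd)).add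
      (continuous_fst.smul (B.continuous.comp continuous_snd))).continuousOn
  · intro t _
    show IsGradient (fun x : Euc 2 => (1-t) • A x + t • B x)
    have heq : (fun x : Euc 2 => (1-t) • A x + t • B x) =
        fun x => ((1-t) • A + t • B) x := by
      funext x; simp
    rw [heq]
    refine isGradient_clm _ fun u v => ?_
    simp only [ContinuousLinearMap.add_apply, ContinuousLinearMap.smul_apply,
      inner_add_left, inner_add_right, real_inner_smul_left, real_inner_smul_right,
      hA u v, hB u v]
  · refine proper_slab (fun t x => (1-t) • A x + t • B x)
      (((continuous_const.sub continuous_fst).smul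
      (A.continuous.comp continuous_snd)).add
      (continuous_fst.smul (B.continuous.comp continuous_snd))) c hc ?_
    intro t ht x
    rcases eq_or_ne x 0 with rfl | hx
    · simp
    · have hnx : (0:ℝ) < ‖x‖ := norm_pos_iff.2 hx
      have h1 := hlow t ht x
      have h2 : |⟪(1-t) • A x + t • B x, x⟫| ≤ ‖(1-t) • A x + t • B x‖ * ‖x‖ :=
        abs_real_inner_le_norm _ _
      have h3 : c * ‖x‖ * ‖x‖ ≤ ‖(1-t) • A x + t • B x‖ * ‖x‖ := by
        calc c * ‖x‖ * ‖x‖ = c * ‖x‖ ^ 2 := by ring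
          _ ≤ _ := le_trans h1 h2
      exact le_of_mul_le_mul_right h3 hnx
  · funext x; simp
  · funext x; simp

/-- for a `C²` function `φ : ℝ² → ℝ` with a nondegenerate critical point `p`,
the Hessian map `x ↦ (Hess_p φ) x` (the derivative at `p` of the gradient of `φ`) is a
proper gradient map; it is proper gradient homotopic to `id` when the Hessian is positive
definite and to `-id` when the Hessian is negative definite. -/
theorem hessian_map_proper_gradient_homotopic (φ : Euc 2 → ℝ) (p : Euc 2)
    (hφ : ContDiff ℝ 2 φ) (hcrit : gradient φ p = 0)
    (hnondeg : Function.Bijective (fderiv ℝ (gradient φ) p)) :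
    IsGradient (fun x : Euc 2 => fderiv ℝ (gradient φ) p x) ∧
    IsProper (fun x : Euc 2 => fderiv ℝ (gradient φ) p x) ∧
    ((∀ v : Euc 2, v ≠ 0 → 0 < ⟪fderiv ℝ (gradient φ) p v, v⟫) →
      ProperGradientHomotopic (fun x : Euc 2 => fderiv ℝ (gradient φ) p x)
        (id : Euc 2 → Euc 2)) ∧
    ((∀ v : Euc 2, v ≠ 0 → ⟪fderiv ℝ (gradient φ) p v, v⟫ < 0) →
      ProperGradientHomotopic (fun x : Euc 2 => fderiv ℝ (gradient φ) p x)
        (fun x : Euc 2 => -x)) := by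
  set A : Euc 2 →L[ℝ] Euc 2 := fderiv ℝ (gradient φ) p with hAdef
  have hsym : ∀ u v, ⟪A u, v⟫ = ⟪u, A v⟫ := hess_symm φ p hφ
  refine ⟨isGradient_clm A hsym, ?_, ?_, ?_⟩
  · -- properness
    intro K hK
    let e : Euc 2 ≃L[ℝ] Euc 2 :=
      (LinearEquiv.ofBijective (A : Euc 2 →ₗ[ℝ] Euc 2) hnondeg).toContinuousLinearEquiv
    have : (fun x : Euc 2 => A x) ⁻¹' K = ⇑e.toHomeomorph ⁻¹' K := rfl
    rw [this]
    exact e.toHomeomorph.isCompact_preimage.2 hK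
  · -- positive definite case
    intro hpos
    obtain ⟨c, hc, hcoer⟩ := coercive A hpos
    have hhom := homotopy_symm A (ContinuousLinearMap.id ℝ (Euc 2)) hsym
      (fun u v => real_inner_comm u v ▸ rfl) (min c 1) (lt_min hc one_pos) ?_
    · have hid : (fun x : Euc 2 => (ContinuousLinearMap.id ℝ (Euc 2)) x) =
          (id : Euc 2 → Euc 2) := rfl
      rwa [hid] at hhom
    · intro t ht x
      have h1 := hcoer x
      have h2 : ⟪(1-t) • A x + t • (ContinuousLinearMap.id ℝ (Euc 2)) x, x⟫ =
          (1-t) * ⟪A x, x⟫ + t * ‖x‖ ^ 2 := by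
        show ⟪(1-t) • A x + t • x, x⟫ = _
        rw [inner_add_left, real_inner_smul_left, real_inner_smul_left,
          real_inner_self_eq_norm_sq]
      rw [h2]
      refine le_trans ?_ (le_abs_self _)
      have h3 := mul_le_mul_of_nonneg_left h1 (sub_nonneg.2 ht.2)
      have e1 : 0 ≤ (1-t) * (c - min c 1) * ‖x‖ ^ 2 :=
        mul_nonneg (mul_nonneg (sub_nonneg.2 ht.2) (sub_nonneg.2 (min_le_left c 1)))
          (sq_nonneg _)
      have e2 : 0 ≤ t * (1 - min c 1) * ‖x‖ ^ 2 :=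
        mul_nonneg (mul_nonneg ht.1 (sub_nonneg.2 (min_le_right c 1))) (sq_nonneg _)
      nlinarith [h3, e1, e2]
  · -- negative definite case
    intro hneg
    have hposneg : ∀ v : Euc 2, v ≠ 0 → 0 < ⟪(-A) v, v⟫ := by
      intro v hv
      simp only [ContinuousLinearMap.neg_apply, inner_neg_left]
      linarith [hneg v hv]
    obtain ⟨c, hc, hcoer⟩ := coercive (-A) hposneg
    have hhom := homotopy_symm A (-(ContinuousLinearMap.id ℝ (Euc 2))) hsym
      (fun u v => by
        simp only [ContinuousLinearMap.neg_apply, ContinuousLinearMap.coe_id', id_eq,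
          inner_neg_left, inner_neg_right, real_inner_comm u v])
      (min c 1) (lt_min hc one_pos) ?_
    · have hid : (fun x : Euc 2 => (-(ContinuousLinearMap.id ℝ (Euc 2))) x) =
          (fun x : Euc 2 => -x) := rfl
      rwa [hid] at hhom
    · intro t ht x
      have h1 := hcoer x
      have h1' : c * ‖x‖ ^ 2 ≤ -⟪A x, x⟫ := by
        simpa [ContinuousLinearMap.neg_apply, inner_neg_left] using h1
      have h2 : ⟪(1-t) • A x + t • (-(ContinuousLinearMap.id ℝ (Euc 2))) x, x⟫ =
          (1-t) * ⟪A x, x⟫ - t * ‖x‖ ^ 2 := by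
        show ⟪(1-t) • A x + t • (-x), x⟫ = _
        rw [inner_add_left, real_inner_smul_left, real_inner_smul_left, inner_neg_left,
          real_inner_self_eq_norm_sq]
        ring
      rw [h2]
      refine le_trans ?_ (neg_le_abs _)
      have h3 := mul_le_mul_of_nonneg_left h1' (sub_nonneg.2 ht.2)
      have e1 : 0 ≤ (1-t) * (c - min c 1) * ‖x‖ ^ 2 :=
        mul_nonneg (mul_nonneg (sub_nonneg.2 ht.2) (sub_nonneg.2 (min_le_left c 1)))
          (sq_nonneg _)
      have e2 : 0 ≤ t * (1 - min c 1) * ‖x‖ ^ 2 :=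
        mul_nonneg (mul_nonneg ht.1 (sub_nonneg.2 (min_le_right c 1))) (sq_nonneg _)
      nlinarith [h3, e1, e2]
end
end

section
/- Let f = ∇φ : ℝ² → ℝ² be a generic proper gradient map whose zero set is a single point p. If p is a source then f is proper gradient homotopic to id_{ℝ²}; if p is a sink then f is proper gradient homotopic to −id_{ℝ²}. -/
open Set Metric Filter

noncomputable section

open scoped RealInnerProductSpace

/-- `p` is a source of the gradient map `f = ∇φ`: a zero of `f` at which the Hessian of `φ`,
i.e. the derivative of `f`, is positive definite. -/
def IsSourceAt (f : Euc 2 → Euc 2) (p : Euc 2) : Prop :=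
  f p = 0 ∧ ∀ v : Euc 2, v ≠ 0 → 0 < ⟪fderiv ℝ f p v, v⟫

/-- `p` is a sink of the gradient map `f = ∇φ`: a zero of `f` at which the Hessian of `φ`
is negative definite. -/
def IsSinkAt (f : Euc 2 → Euc 2) (p : Euc 2) : Prop :=
  f p = 0 ∧ ∀ v : Euc 2, v ≠ 0 → ⟪fderiv ℝ f p v, v⟫ < 0

/-- `p` is a saddle of `f`: a zero of `f` which is neither a source nor a sink. -/
def IsSaddleAt (f : Euc 2 → Euc 2) (p : Euc 2) : Prop :=
  f p = 0 ∧ ¬ IsSourceAt f p ∧ ¬ IsSinkAt f p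

/-- `γ : ℝ → ℝ²` is a (full) trajectory of the local flow of `ẋ = f(x)`. -/
def IsTrajectory (f : Euc 2 → Euc 2) (γ : ℝ → Euc 2) : Prop :=
  ∀ t : ℝ, HasDerivAt γ (f (γ t)) t

/-- No trajectory of the local flow of `ẋ = f(x)` connects two (distinct) saddle points. -/
def NoSaddleConnection (f : Euc 2 → Euc 2) : Prop :=
  ¬ ∃ (γ : ℝ → Euc 2) (p q : Euc 2), IsTrajectory f γ ∧
      IsSaddleAt f p ∧ IsSaddleAt f q ∧ p ≠ q ∧
      Filter.Tendsto γ Filter.atBot (nhds p) ∧ Filter.Tendsto γ Filter.atTop (nhds q)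

/-- `f` is a generic gradient map with potential `φ`: `φ` is `C²` with `∇φ = f`, all critical
points are nondegenerate, distinct critical points have distinct critical values, and no
trajectory of the local flow connects two saddle points. -/
def IsGenericGradientPair (φ : Euc 2 → ℝ) (f : Euc 2 → Euc 2) : Prop :=
  ContDiff ℝ 2 φ ∧ (∀ x, gradient φ x = f x) ∧
  (∀ p : Euc 2, f p = 0 → Function.Bijective (fderiv ℝ f p)) ∧
  (∀ p q : Euc 2, f p = 0 → f q = 0 → φ p = φ q → p = q) ∧
  NoSaddleConnection f

/-- `f` is a generic gradient map. -/
def IsGenericGradient (f : Euc 2 → Euc 2) : Prop :=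
  ∃ φ : Euc 2 → ℝ, IsGenericGradientPair φ f

/-- The set `A_f` of sources and sinks of `f`. -/
def sourceSinkSet (f : Euc 2 → Euc 2) : Set (Euc 2) :=
  {p | IsSourceAt f p ∨ IsSinkAt f p}

/-- The set `B_f` of saddles of `f`. -/
def saddleSet (f : Euc 2 → Euc 2) : Set (Euc 2) :=
  {p | IsSaddleAt f p}

/-- `z ∈ E_x⁻`: the trajectory through `z` tends to `x` as `t → -∞`. -/
def InBackwardBasin (f : Euc 2 → Euc 2) (x z : Euc 2) : Prop :=
  ∃ γ : ℝ → Euc 2, γ 0 = z ∧ (∀ t ∈ Set.Iic (0:ℝ), HasDerivAt γ (f (γ t)) t) ∧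
    Filter.Tendsto γ Filter.atBot (nhds x)

/-- `z ∈ E_y⁺` for a stationary point `y`: the trajectory through `z` tends to `y` in
forward time.  (A forward trajectory converging to a stationary point exists for all
`t ≥ 0`.) -/
def InForwardBasin (f : Euc 2 → Euc 2) (y z : Euc 2) : Prop :=
  ∃ γ : ℝ → Euc 2, γ 0 = z ∧ (∀ t ∈ Set.Ici (0:ℝ), HasDerivAt γ (f (γ t)) t) ∧
    Filter.Tendsto γ Filter.atTop (nhds y)

/-- `z ∈ E_∞⁺`: the trajectory through `z` escapes to infinity as `t → ω_z`, where
`ω_z ∈ (0, ∞]` is the endpoint of the maximal forward interval of existence. -/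
def EscapesToInfinity (f : Euc 2 → Euc 2) (z : Euc 2) : Prop :=
  ∃ γ : ℝ → Euc 2, γ 0 = z ∧
    (((∀ t ∈ Set.Ici (0:ℝ), HasDerivAt γ (f (γ t)) t) ∧
        Filter.Tendsto (fun t => ‖γ t‖) Filter.atTop Filter.atTop) ∨
      (∃ ω : ℝ, 0 < ω ∧ (∀ t ∈ Set.Ico (0:ℝ) ω, HasDerivAt γ (f (γ t)) t) ∧
        Filter.Tendsto (fun t => ‖γ t‖) (nhdsWithin ω (Set.Iio ω)) Filter.atTop))

/-- The set of asymptotic backward directions `V_x^P ⊆ S¹`: unit vectors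
`v_z = lim_{t → -∞} f(η^t z)/|f(η^t z)|` over points `z ∈ E_x⁻` satisfying `P`
(membership in `E_y⁺` or `E_∞⁺`). -/
def dirSet (f : Euc 2 → Euc 2) (x : Euc 2) (P : Euc 2 → Prop) : Set (Euc 2) :=
  {v | ∃ (z : Euc 2) (γ : ℝ → Euc 2), γ 0 = z ∧
    (∀ t ∈ Set.Iic (0:ℝ), HasDerivAt γ (f (γ t)) t) ∧
    Filter.Tendsto γ Filter.atBot (nhds x) ∧ P z ∧
    Filter.Tendsto (fun t => (‖f (γ t)‖)⁻¹ • f (γ t)) Filter.atBot (nhds v)}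

/-- `V_x^y` for a stationary point `y`. -/
def dirSetTo (f : Euc 2 → Euc 2) (x y : Euc 2) : Set (Euc 2) :=
  dirSet f x (InForwardBasin f y)

/-- `V_x^∞`. -/
def dirSetInf (f : Euc 2 → Euc 2) (x : Euc 2) : Set (Euc 2) :=
  dirSet f x (EscapesToInfinity f)

namespace SZ

open InnerProductSpace Topology

lemma inner_f (φ : Euc 2 → ℝ) {f : Euc 2 → Euc 2} (hgrad : ∀ x, gradient φ x = f x)
    (y z : Euc 2) : ⟪f y, z⟫ = fderiv ℝ φ y z := by
  rw [← hgrad y]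
  exact toDual_symm_apply

lemma f_c1 {φ : Euc 2 → ℝ} {f : Euc 2 → Euc 2} (hφ : ContDiff ℝ 2 φ)
    (hgrad : ∀ x, gradient φ x = f x) : ContDiff ℝ 1 f := by
  rw [contDiff_euclidean]
  intro i
  have : (fun y => f y i) = fun y =>
      (ContinuousLinearMap.apply ℝ ℝ (EuclideanSpace.single i (1:ℝ))) (fderiv ℝ φ y) := by
    funext y
    have h1 : ⟪f y, EuclideanSpace.single i (1:ℝ)⟫ = f y i := by
      rw [EuclideanSpace.inner_single_right]; simp
    have h2 := inner_f φ hgrad y (EuclideanSpace.single i (1:ℝ))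
    simp only [ContinuousLinearMap.apply_apply]
    rw [← h2, h1]
  rw [this]
  exact (ContinuousLinearMap.apply ℝ ℝ _).contDiff.comp (hφ.fderiv_right (m := 1) (by norm_num))

lemma A_symm {φ : Euc 2 → ℝ} {f : Euc 2 → Euc 2} (hφ : ContDiff ℝ 2 φ)
    (hgrad : ∀ x, gradient φ x = f x) (p u v : Euc 2) :
    ⟪fderiv ℝ f p u, v⟫ = ⟪fderiv ℝ f p v, u⟫ := by
  have hd1 : Differentiable ℝ φ := hφ.differentiable (by norm_num)
  have h1 : ContDiff ℝ 1 (fderiv ℝ φ) := hφ.fderiv_right (m := 1) (by norm_num)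
  have hdd : HasFDerivAt (fderiv ℝ φ) (fderiv ℝ (fderiv ℝ φ) p) p :=
    ((h1.differentiable (by norm_num)) p).hasFDerivAt
  have hsymm := second_derivative_symmetric (fun y => (hd1 y).hasFDerivAt) hdd
  have hfdf : HasFDerivAt f (fderiv ℝ f p) p :=
    (((f_c1 hφ hgrad).differentiable (by norm_num)) p).hasFDerivAt
  have key : ∀ z w : Euc 2, ⟪z, fderiv ℝ f p w⟫ = fderiv ℝ (fderiv ℝ φ) p w z := by
    intro z w
    have e1 : HasFDerivAt (fun y => ⟪z, f y⟫) ((innerSL ℝ z).comp (fderiv ℝ f p)) p :=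
      (innerSL ℝ z).hasFDerivAt.comp p hfdf
    have e3 : HasFDerivAt (fun y => fderiv ℝ φ y z)
        ((ContinuousLinearMap.apply ℝ ℝ z).comp (fderiv ℝ (fderiv ℝ φ) p)) p :=
      (ContinuousLinearMap.apply ℝ ℝ z).hasFDerivAt.comp p hdd
    have e2 : (fun y => ⟪z, f y⟫) = fun y => fderiv ℝ φ y z := by
      funext y; rw [real_inner_comm, inner_f φ hgrad]
    rw [e2] at e1
    have := e1.unique e3
    calc ⟪z, fderiv ℝ f p w⟫ = ((innerSL ℝ z).comp (fderiv ℝ f p)) w := rfl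
      _ = ((ContinuousLinearMap.apply ℝ ℝ z).comp (fderiv ℝ (fderiv ℝ φ) p)) w := by rw [this]
      _ = fderiv ℝ (fderiv ℝ φ) p w z := rfl
  calc ⟪fderiv ℝ f p u, v⟫ = ⟪v, fderiv ℝ f p u⟫ := real_inner_comm _ _
    _ = fderiv ℝ (fderiv ℝ φ) p u v := key v u
    _ = fderiv ℝ (fderiv ℝ φ) p v u := hsymm u v
    _ = ⟪u, fderiv ℝ f p v⟫ := (key u v).symm
    _ = ⟪fderiv ℝ f p v, u⟫ := real_inner_comm _ _

lemma quad_hasGradient (B : Euc 2 →L[ℝ] Euc 2)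
    (hB : ∀ u v : Euc 2, ⟪B u, v⟫ = ⟪B v, u⟫) (q x : Euc 2) :
    HasGradientAt (fun y => (1/2 : ℝ) * ⟪B (y - q), y - q⟫) (B (x - q)) x := by
  rw [hasGradientAt_iff_hasFDerivAt]
  have h1 : HasFDerivAt (fun y : Euc 2 => y - q) (ContinuousLinearMap.id ℝ (Euc 2)) x := by
    simpa using (hasFDerivAt_id x).sub_const q
  have h2 : HasFDerivAt (fun y : Euc 2 => B (y - q)) (B.comp (ContinuousLinearMap.id ℝ (Euc 2))) x :=
    B.hasFDerivAt.comp x h1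
  have h3 := (h2.inner ℝ h1).const_mul (1/2 : ℝ)
  refine h3.congr_fderiv ?_
  ext v
  simp only [ContinuousLinearMap.smul_apply, ContinuousLinearMap.comp_apply,
    ContinuousLinearMap.prod_apply, ContinuousLinearMap.coe_id', id_eq,
    fderivInnerCLM_apply, toDual_apply_apply, ContinuousLinearMap.coe_id]
  rw [hB v (x - q), smul_eq_mul]
  ring

lemma quad_contDiff (B : Euc 2 →L[ℝ] Euc 2) (q : Euc 2) :
    ContDiff ℝ 1 (fun y => (1/2 : ℝ) * ⟪B (y - q), y - q⟫) := by
  have h1 : ContDiff ℝ 1 (fun y : Euc 2 => y - q) := contDiff_id.sub contDiff_const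
  exact contDiff_const.mul ((B.contDiff.comp h1).inner ℝ h1)

lemma stage1_isGradient {φ : Euc 2 → ℝ} {f : Euc 2 → Euc 2} (hφ : ContDiff ℝ 2 φ)
    (hgrad : ∀ x, gradient φ x = f x) (p : Euc 2) (ε : ℝ) (hε : ε ≠ 0) :
    IsGradient (fun x => ε⁻¹ • f (p + ε • (x - p))) := by
  refine ⟨fun x => (ε⁻¹ * ε⁻¹) * φ (p + ε • (x - p)), ?_, ?_⟩
  · exact contDiff_const.mul ((hφ.of_le one_le_two).comp
      (contDiff_const.add ((contDiff_id.sub contDiff_const).const_smul ε)))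
  · intro x
    apply HasGradientAt.gradient
    rw [hasGradientAt_iff_hasFDerivAt]
    have hα : HasFDerivAt (fun y : Euc 2 => p + ε • (y - p))
        (ε • ContinuousLinearMap.id ℝ (Euc 2)) x := by
      have h1 : HasFDerivAt (fun y : Euc 2 => y - p) (ContinuousLinearMap.id ℝ (Euc 2)) x := by
        simpa using (hasFDerivAt_id x).sub_const p
      simpa using (h1.const_smul ε).const_add p
    have hφd : HasFDerivAt φ (toDual ℝ (Euc 2) (f (p + ε • (x - p)))) (p + ε • (x - p)) := by
      have h0 : HasGradientAt φ (gradient φ (p + ε • (x - p))) (p + ε • (x - p)) :=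
        ((hφ.differentiable (by norm_num)) _).hasGradientAt
      rw [hgrad] at h0
      exact h0.hasFDerivAt
    have hcomp := hφd.comp x hα
    have h4 := hcomp.const_mul (ε⁻¹ * ε⁻¹)
    refine h4.congr_fderiv ?_
    ext v
    simp only [ContinuousLinearMap.smul_apply, ContinuousLinearMap.comp_apply,
      ContinuousLinearMap.coe_id', id_eq, toDual_apply_apply, smul_eq_mul,
      inner_smul_left, conj_trivial]
    rw [real_inner_smul_right]
    field_simp

lemma posdef_coercive (A : Euc 2 →L[ℝ] Euc 2)
    (hA : ∀ v : Euc 2, v ≠ 0 → 0 < ⟪A v, v⟫) :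
    ∃ c > (0:ℝ), ∀ v : Euc 2, c * ‖v‖^2 ≤ ⟪A v, v⟫ := by
  have hsph : IsCompact (sphere (0:Euc 2) 1) := isCompact_sphere 0 1
  have hne : (sphere (0:Euc 2) 1).Nonempty := NormedSpace.sphere_nonempty.mpr zero_le_one
  have hcont : Continuous fun v : Euc 2 => ⟪A v, v⟫ := A.continuous.inner continuous_id
  obtain ⟨u, hu, hmin⟩ := hsph.exists_isMinOn hne hcont.continuousOn
  have hu1 : ‖u‖ = 1 := mem_sphere_zero_iff_norm.mp hu
  have hune : u ≠ 0 := by intro h; rw [h, norm_zero] at hu1; norm_num at hu1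
  refine ⟨⟪A u, u⟫, hA u hune, ?_⟩
  intro v
  rcases eq_or_ne v 0 with rfl | hv
  · simp
  · set w : Euc 2 := ‖v‖⁻¹ • v with hw
    have hws : w ∈ sphere (0:Euc 2) 1 := by
      rw [mem_sphere_zero_iff_norm]
      exact norm_smul_inv_norm hv
    have hmw := hmin hws
    have hvw : v = ‖v‖ • w := by
      rw [hw, smul_smul, mul_inv_cancel₀ (norm_ne_zero_iff.mpr hv), one_smul]
    have hexp : ⟪A v, v⟫ = ‖v‖^2 * ⟪A w, w⟫ := by
      conv_lhs => rw [hvw]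
      rw [map_smul, real_inner_smul_left, real_inner_smul_right]
      ring
    rw [hexp]
    have h2 : (0:ℝ) ≤ ‖v‖^2 := sq_nonneg _
    calc ⟪A u, u⟫ * ‖v‖^2 ≤ ⟪A w, w⟫ * ‖v‖^2 := by
          apply mul_le_mul_of_nonneg_right hmw h2
      _ = ‖v‖^2 * ⟪A w, w⟫ := by ring

lemma coercive_norm_lower (A : Euc 2 →L[ℝ] Euc 2) (c : ℝ)
    (hA : ∀ v : Euc 2, c * ‖v‖^2 ≤ ⟪A v, v⟫) (v : Euc 2) : c * ‖v‖ ≤ ‖A v‖ := by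
  rcases eq_or_ne v 0 with rfl | hv
  · simp
  · have h1 : c * ‖v‖^2 ≤ ‖A v‖ * ‖v‖ :=
      le_trans (hA v) (real_inner_le_norm (A v) v)
    have hvpos : 0 < ‖v‖ := norm_pos_iff.mpr hv
    nlinarith [hvpos]

lemma local_lower {f : Euc 2 → Euc 2} (hf1 : ContDiff ℝ 1 f) {p : Euc 2} (hfp : f p = 0)
    (c : ℝ) (hc : 0 < c) (hA : ∀ v : Euc 2, c * ‖v‖ ≤ ‖fderiv ℝ f p v‖) :
    ∃ δ > (0:ℝ), ∀ y : Euc 2, ‖y - p‖ ≤ δ → c/2 * ‖y - p‖ ≤ ‖f y‖ := by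
  have hd : HasFDerivAt f (fderiv ℝ f p) p := ((hf1.differentiable (by norm_num)) p).hasFDerivAt
  have hlo := hd.isLittleO.def (show (0:ℝ) < c/2 by linarith)
  rw [Metric.eventually_nhds_iff] at hlo
  obtain ⟨δ, hδ, hball⟩ := hlo
  refine ⟨δ/2, by linarith, ?_⟩
  intro y hy
  have hyb : dist y p < δ := by
    rw [dist_eq_norm]; linarith
  have h1 := hball hyb
  rw [hfp, sub_zero] at h1
  have h2 : ‖fderiv ℝ f p (y - p)‖ - ‖f y - fderiv ℝ f p (y - p)‖ ≤ ‖f y‖ := by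
    have := norm_sub_norm_le (fderiv ℝ f p (y - p)) (fderiv ℝ f p (y - p) - f y)
    simp only [sub_sub_cancel] at this
    calc ‖fderiv ℝ f p (y - p)‖ - ‖f y - fderiv ℝ f p (y - p)‖
        = ‖fderiv ℝ f p (y - p)‖ - ‖fderiv ℝ f p (y - p) - f y‖ := by rw [norm_sub_rev]
      _ ≤ ‖f y‖ := this
  have h3 : ‖f y - fderiv ℝ f p (y - p)‖ ≤ c/2 * ‖y - p‖ := h1
  have h4 := hA (y - p)
  linarith

lemma preimage_bound {f : Euc 2 → Euc 2} (hprop : IsProper f)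
    (p : Euc 2) (M : ℝ) : ∃ R > (0:ℝ), ∀ y : Euc 2, ‖f y‖ ≤ M → ‖y - p‖ ≤ R := by
  obtain ⟨R, hR⟩ :=
    ((hprop (closedBall 0 M) (isCompact_closedBall 0 M)).isBounded).subset_closedBall p
  refine ⟨max R 1, lt_max_of_lt_right one_pos, ?_⟩
  intro y hy
  have h1 : y ∈ f ⁻¹' closedBall 0 M := by
    simp only [mem_preimage, mem_closedBall, dist_zero_right]
    exact hy
  have h2 := hR h1
  rw [mem_closedBall, dist_eq_norm] at h2
  exact le_trans h2 (le_max_left _ _)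

lemma offball_lower {f : Euc 2 → Euc 2} (hfc : Continuous f)
    (hprop : IsProper f)
    {p : Euc 2} (hzero : f ⁻¹' {0} = {p}) (δ : ℝ) (hδ : 0 < δ) :
    ∃ m > (0:ℝ), ∀ y : Euc 2, δ ≤ ‖y - p‖ → m ≤ ‖f y‖ := by
  set S := f ⁻¹' (closedBall 0 1) ∩ {y : Euc 2 | δ ≤ ‖y - p‖} with hS
  have hclosed : IsClosed {y : Euc 2 | δ ≤ ‖y - p‖} :=
    isClosed_le continuous_const (continuous_id.sub continuous_const).norm
  have hScomp : IsCompact S :=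
    (hprop _ (isCompact_closedBall 0 1)).inter_right hclosed
  rcases S.eq_empty_or_nonempty with hSe | hSne
  · refine ⟨1, one_pos, ?_⟩
    intro y hy
    by_contra h
    push_neg at h
    have : y ∈ S := ⟨by simp only [mem_preimage, mem_closedBall, dist_zero_right]; linarith, hy⟩
    rw [hSe] at this
    exact this
  · obtain ⟨y₀, hy₀S, hmin⟩ := hScomp.exists_isMinOn hSne (hfc.norm.continuousOn)
    have hy₀ : f y₀ ≠ 0 := by
      intro h
      have h1 : y₀ ∈ f ⁻¹' {0} := h
      rw [hzero] at h1
      have h2 := hy₀S.2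
      rw [h1] at h2
      simp only [mem_setOf_eq, sub_self, norm_zero] at h2
      linarith
    refine ⟨min ‖f y₀‖ 1, lt_min (norm_pos_iff.mpr hy₀) one_pos, ?_⟩
    intro y hy
    by_cases h1 : ‖f y‖ ≤ 1
    · have hyS : y ∈ S :=
        ⟨by simp only [mem_preimage, mem_closedBall, dist_zero_right]; exact h1, hy⟩
      exact le_trans (min_le_left _ _) (hmin hyS)
    · exact le_trans (min_le_right _ _) (by linarith)

lemma G_cont {f : Euc 2 → Euc 2} (hf1 : ContDiff ℝ 1 f) {p : Euc 2} (hfp : f p = 0) :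
    Continuous (fun q : ℝ × Euc 2 =>
      if q.1 = 0 then (fderiv ℝ f p) (q.2 - p) else (q.1)⁻¹ • f (p + q.1 • (q.2 - p))) := by
  set A := fderiv ℝ f p with hA
  set G := fun q : ℝ × Euc 2 =>
      if q.1 = 0 then A (q.2 - p) else (q.1)⁻¹ • f (p + q.1 • (q.2 - p)) with hG
  have hAc : Continuous (fun q : ℝ × Euc 2 => A (q.2 - p)) :=
    A.continuous.comp (continuous_snd.sub continuous_const)
  rw [continuous_iff_continuousAt]
  rintro ⟨ε₀, x₀⟩
  by_cases hε : ε₀ = 0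
  · subst hε
    have hstrict : HasStrictFDerivAt f A p := (hf1.contDiffAt).hasStrictFDerivAt (by norm_num)
    have hGval : G (0, x₀) = A (x₀ - p) := by simp [hG]
    unfold ContinuousAt
    rw [hGval]
    have herr : Tendsto (fun q : ℝ × Euc 2 => G q - A (q.2 - p)) (𝓝 (0, x₀)) (𝓝 0) := by
      rw [NormedAddCommGroup.tendsto_nhds_zero]
      intro c hc
      set c' := c / (2 * (‖x₀ - p‖ + 1)) with hc'
      have hx1 : 0 < ‖x₀ - p‖ + 1 := by positivity
      have hc'pos : 0 < c' := by positivity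
      have hev := hstrict.isLittleO.def hc'pos
      have hm : Tendsto (fun q : ℝ × Euc 2 => (p + q.1 • (q.2 - p), p)) (𝓝 (0, x₀))
          (𝓝 (p, p)) := by
        have hcm : Continuous (fun q : ℝ × Euc 2 => (p + q.1 • (q.2 - p), p)) := by
          exact (continuous_const.add (continuous_fst.smul
            (continuous_snd.sub continuous_const))).prodMk continuous_const
        have := hcm.tendsto (0, x₀)
        simpa using this
      have hev2 := hm.eventually hev
      have hnv : Tendsto (fun q : ℝ × Euc 2 => ‖q.2 - p‖) (𝓝 (0, x₀)) (𝓝 ‖x₀ - p‖) := by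
        exact ((continuous_snd.sub continuous_const).norm).tendsto' _ _ rfl
      have hev3 : ∀ᶠ q : ℝ × Euc 2 in 𝓝 (0, x₀), ‖q.2 - p‖ < ‖x₀ - p‖ + 1 :=
        hnv.eventually (eventually_lt_nhds (by linarith))
      filter_upwards [hev2, hev3] with q h1 h2
      by_cases hq : q.1 = 0
      · have : G q - A (q.2 - p) = 0 := by
          simp [hG, hq]
        rw [this, norm_zero]; exact hc
      · have hGq : G q = (q.1)⁻¹ • f (p + q.1 • (q.2 - p)) := by
          simp [hG, hq]
        have hsplit : G q - A (q.2 - p) =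
            (q.1)⁻¹ • (f (p + q.1 • (q.2 - p)) - f p - A (q.1 • (q.2 - p))) := by
          rw [hGq, hfp, sub_zero]
          generalize f (p + q.1 • (q.2 - p)) = w
          rw [map_smul, smul_sub, smul_smul, inv_mul_cancel₀ hq, one_smul]
        rw [hsplit, norm_smul]
        have h1' : ‖f (p + q.1 • (q.2 - p)) - f p - A ((p + q.1 • (q.2 - p)) - p)‖
            ≤ c' * ‖(p + q.1 • (q.2 - p)) - p‖ := h1
        simp only [add_sub_cancel_left] at h1'
        have hns : ‖q.1 • (q.2 - p)‖ = |q.1| * ‖q.2 - p‖ := by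
          rw [norm_smul, Real.norm_eq_abs]
        calc ‖(q.1)⁻¹‖ * ‖f (p + q.1 • (q.2 - p)) - f p - A (q.1 • (q.2 - p))‖
            ≤ ‖(q.1)⁻¹‖ * (c' * (|q.1| * ‖q.2 - p‖)) := by
              apply mul_le_mul_of_nonneg_left _ (norm_nonneg _)
              rw [← hns]; exact h1'
          _ = c' * ‖q.2 - p‖ := by
              rw [Real.norm_eq_abs, abs_inv]
              have : |q.1| ≠ 0 := abs_ne_zero.mpr hq
              field_simp
          _ < c' * (‖x₀ - p‖ + 1) := by
              apply mul_lt_mul_of_pos_left h2 hc'pos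
          _ = c / 2 := by
              rw [hc']
              field_simp
          _ < c := by linarith
    have := herr.add (hAc.tendsto (0, x₀))
    simp only [zero_add] at this
    simpa [sub_add_cancel] using this
  · have hopen : IsOpen {q : ℝ × Euc 2 | q.1 ≠ 0} := isOpen_ne_fun continuous_fst continuous_const
    have hGeq : ∀ q ∈ {q : ℝ × Euc 2 | q.1 ≠ 0},
        G q = (q.1)⁻¹ • f (p + q.1 • (q.2 - p)) := by
      intro q hq
      simp only [mem_setOf_eq] at hq
      simp [hG, hq]
    have hcf : ContinuousAt (fun q : ℝ × Euc 2 => (q.1)⁻¹ • f (p + q.1 • (q.2 - p))) (ε₀, x₀) := by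
      refine ContinuousAt.smul (f := fun q : ℝ × Euc 2 => (q.1)⁻¹)
        (g := fun q : ℝ × Euc 2 => f (p + q.1 • (q.2 - p))) ?_ ?_
      · exact (continuousAt_fst).inv₀ hε
      · exact (hf1.continuous.comp (continuous_const.add (continuous_fst.smul
          (continuous_snd.sub continuous_const)))).continuousAt
    have hmem : (ε₀, x₀) ∈ {q : ℝ × Euc 2 | q.1 ≠ 0} := hε
    have hevq : (fun q : ℝ × Euc 2 => (q.1)⁻¹ • f (p + q.1 • (q.2 - p))) =ᶠ[𝓝 (ε₀, x₀)] G := by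
      filter_upwards [hopen.mem_nhds hmem] with q hq
      exact (hGeq q hq).symm
    exact hcf.congr hevq

lemma stage1_bound {f : Euc 2 → Euc 2} {p : Euc 2} (A : Euc 2 →L[ℝ] Euc 2)
    {c δ m M R₀ : ℝ} (hc : 0 < c) (hm : 0 < m) (hM : 0 < M)
    (hnormA : ∀ v : Euc 2, c * ‖v‖ ≤ ‖A v‖)
    (hloc : ∀ y : Euc 2, ‖y - p‖ ≤ δ → c/2 * ‖y - p‖ ≤ ‖f y‖)
    (hoff : ∀ y : Euc 2, δ ≤ ‖y - p‖ → m ≤ ‖f y‖)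
    (hR₀ : ∀ y : Euc 2, ‖f y‖ ≤ M → ‖y - p‖ ≤ R₀)
    (ε : ℝ) (hε0 : 0 ≤ ε) (hε1 : ε ≤ 1) (x : Euc 2)
    (hb : ‖(if ε = 0 then A (x - p) else ε⁻¹ • f (p + ε • (x - p)))‖ ≤ M) :
    ‖x - p‖ ≤ max (M/c) (max (2*M/c) (R₀*M/m)) := by
  by_cases hε : ε = 0
  · rw [if_pos hε] at hb
    have h1 : ‖x - p‖ ≤ M / c := by
      rw [le_div_iff₀ hc]
      nlinarith [hnormA (x - p)]
    exact le_trans h1 (le_max_left _ _)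
  · rw [if_neg hε] at hb
    have hεpos : 0 < ε := lt_of_le_of_ne hε0 (Ne.symm hε)
    set y := p + ε • (x - p) with hy
    have hyp : y - p = ε • (x - p) := by rw [hy]; abel
    have hfy : f y = ε • (ε⁻¹ • f y) := by
      rw [smul_smul, mul_inv_cancel₀ hε, one_smul]
    have hnfy : ‖f y‖ ≤ ε * M := by
      calc ‖f y‖ = ε * ‖ε⁻¹ • f y‖ := by
            conv_lhs => rw [hfy]
            rw [norm_smul, Real.norm_eq_abs, abs_of_pos hεpos]
        _ ≤ ε * M := mul_le_mul_of_nonneg_left hb (le_of_lt hεpos)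
    have hnfyM : ‖f y‖ ≤ M := le_trans hnfy (by nlinarith)
    have hyR : ‖y - p‖ ≤ R₀ := hR₀ y hnfyM
    have hyn : ‖y - p‖ = ε * ‖x - p‖ := by
      rw [hyp, norm_smul, Real.norm_eq_abs, abs_of_pos hεpos]
    by_cases hcase : ‖y - p‖ ≤ δ
    · have h1 := hloc y hcase
      rw [hyn] at h1
      have h2 : c/2 * ‖x - p‖ ≤ M := by
        have h3 := le_trans h1 hnfy
        nlinarith
      have h4 : ‖x - p‖ ≤ 2*M/c := by
        rw [le_div_iff₀ hc]
        nlinarith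
      exact le_trans h4 (le_trans (le_max_left _ _) (le_max_right _ _))
    · push_neg at hcase
      have h1 := hoff y (le_of_lt hcase)
      have hεlb : m ≤ ε * M := le_trans h1 hnfy
      have h5 : ‖x - p‖ ≤ R₀ * M / m := by
        rw [le_div_iff₀ hm]
        have h3 : ε * ‖x - p‖ ≤ R₀ := by rw [← hyn]; exact hyR
        nlinarith [mul_le_mul_of_nonneg_left hεlb (norm_nonneg (x - p)),
          mul_le_mul_of_nonneg_left h3 (le_of_lt hM)]
      exact le_trans h5 (le_trans (le_max_right _ _) (le_max_right _ _))

lemma stage2_bound {p : Euc 2} (A : Euc 2 →L[ℝ] Euc 2) {c M : ℝ} (hc : 0 < c) (hM : 0 ≤ M)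
    (hcoer : ∀ v : Euc 2, c * ‖v‖^2 ≤ ⟪A v, v⟫)
    (τ : ℝ) (hτ0 : 0 ≤ τ) (hτ1 : τ ≤ 1) (x : Euc 2)
    (hb : ‖(1 - τ) • A (x - p) + τ • x‖ ≤ M) :
    ‖x - p‖ ≤ (M + ‖p‖) / min c 1 := by
  set v := x - p with hv
  set c₁ := min c 1 with hc₁
  have hc₁pos : 0 < c₁ := lt_min hc one_pos
  have hx : x = v + p := by rw [hv]; abel
  have e1 : ⟪(1 - τ) • A v + τ • x, v⟫
      = (1 - τ) * ⟪A v, v⟫ + τ * ⟪v, v⟫ + τ * ⟪p, v⟫ := by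
    conv_lhs => rw [hx]
    rw [inner_add_left, real_inner_smul_left, real_inner_smul_left, inner_add_left]
    ring
  have h2 : ⟪v, v⟫ = ‖v‖^2 := real_inner_self_eq_norm_sq v
  have h3 : -(‖p‖ * ‖v‖) ≤ ⟪p, v⟫ := by
    have := abs_real_inner_le_norm p v
    rw [abs_le] at this
    linarith [this.1]
  have h4 : c * ‖v‖^2 ≤ ⟪A v, v⟫ := hcoer v
  have h5 : ⟪(1 - τ) • A v + τ • x, v⟫ ≤ M * ‖v‖ := by
    calc ⟪(1 - τ) • A v + τ • x, v⟫ ≤ ‖(1 - τ) • A v + τ • x‖ * ‖v‖ :=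
        real_inner_le_norm _ _
      _ ≤ M * ‖v‖ := mul_le_mul_of_nonneg_right hb (norm_nonneg v)
  have hlow : c₁ * ‖v‖^2 - ‖p‖ * ‖v‖ ≤ ⟪(1 - τ) • A v + τ • x, v⟫ := by
    rw [e1, h2]
    have hcc : c₁ ≤ c := min_le_left _ _
    have hc1 : c₁ ≤ 1 := min_le_right _ _
    have hτ' : (0:ℝ) ≤ 1 - τ := by linarith
    have k1 : (1 - τ) * (c₁ * ‖v‖^2) ≤ (1 - τ) * ⟪A v, v⟫ := by
      apply mul_le_mul_of_nonneg_left _ hτ'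
      nlinarith [sq_nonneg ‖v‖]
    have k2 : τ * (c₁ * ‖v‖^2) ≤ τ * ‖v‖^2 := by
      apply mul_le_mul_of_nonneg_left _ hτ0
      nlinarith [sq_nonneg ‖v‖]
    have k3 : τ * (-(‖p‖ * ‖v‖)) ≤ τ * ⟪p, v⟫ := mul_le_mul_of_nonneg_left h3 hτ0
    have k4 : τ * (‖p‖ * ‖v‖) ≤ 1 * (‖p‖ * ‖v‖) :=
      mul_le_mul_of_nonneg_right hτ1 (mul_nonneg (norm_nonneg p) (norm_nonneg v))
    nlinarith [k1, k2, k3, k4]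
  have hkey : c₁ * ‖v‖^2 ≤ (M + ‖p‖) * ‖v‖ := by nlinarith
  rw [le_div_iff₀ hc₁pos]
  rcases eq_or_lt_of_le (norm_nonneg v) with hv0 | hvpos
  · rw [← hv0, zero_mul]
    positivity
  · nlinarith

lemma gradient_neg' {ψ : Euc 2 → ℝ} (hψ : ContDiff ℝ 1 ψ) (x : Euc 2) :
    gradient (fun y => -ψ y) x = - gradient ψ x := by
  have h1 : HasGradientAt ψ (gradient ψ x) x := ((hψ.differentiable (by norm_num)) x).hasGradientAt
  have h2 : HasFDerivAt ψ (toDual ℝ (Euc 2) (gradient ψ x)) x := h1.hasFDerivAt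
  have h3 := h2.neg
  have h4 : HasFDerivAt (fun y => -ψ y) (toDual ℝ (Euc 2) (- gradient ψ x)) x := by
    rw [map_neg]; exact h3
  exact (hasGradientAt_iff_hasFDerivAt.mpr h4).gradient

end SZ

namespace SZ

open InnerProductSpace Topology

lemma source_case {φ : Euc 2 → ℝ} {f : Euc 2 → Euc 2} (hφ : ContDiff ℝ 2 φ)
    (hgrad : ∀ x, gradient φ x = f x) (hprop : IsProper f)
    {p : Euc 2} (hzero : f ⁻¹' {0} = {p}) (hsrc : IsSourceAt f p) :
    ProperGradientHomotopic f (id : Euc 2 → Euc 2) := by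
  obtain ⟨hfp, hpos⟩ := hsrc
  have hf1 : ContDiff ℝ 1 f := f_c1 hφ hgrad
  set A := fderiv ℝ f p with hA
  have hAsymm : ∀ u v : Euc 2, ⟪A u, v⟫ = ⟪A v, u⟫ := fun u v => A_symm hφ hgrad p u v
  obtain ⟨c, hc, hcoer⟩ := posdef_coercive A hpos
  have hnormA : ∀ v, c * ‖v‖ ≤ ‖A v‖ := coercive_norm_lower A c hcoer
  obtain ⟨δ, hδ, hloc⟩ := local_lower hf1 hfp c hc hnormA
  obtain ⟨m, hm, hoff⟩ := offball_lower hf1.continuous hprop hzero δ hδ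
  set G : ℝ × Euc 2 → Euc 2 := fun q =>
    if q.1 = 0 then A (q.2 - p) else (q.1)⁻¹ • f (p + q.1 • (q.2 - p)) with hGdef
  set H : ℝ → Euc 2 → Euc 2 := fun t x =>
    if t ≤ 1/2 then G (1 - 2*t, x) else (2 - 2*t) • A (x - p) + (2*t - 1) • x with hHdef
  have hGcont : Continuous G := G_cont hf1 hfp
  have hHapp : ∀ t x, H t x = if t ≤ 1/2 then G (1 - 2*t, x)
      else (2 - 2*t) • A (x - p) + (2*t - 1) • x := fun _ _ => rfl
  have hGapp : ∀ (s : ℝ) (x : Euc 2), G (s, x) = if s = 0 then A (x - p)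
      else s⁻¹ • f (p + s • (x - p)) := fun _ _ => rfl
  have hHcont : Continuous (fun q : ℝ × Euc 2 => H q.1 q.2) := by
    simp only [hHdef]
    apply Continuous.if_le
    · exact hGcont.comp ((continuous_const.sub
        (continuous_const.mul continuous_fst)).prodMk continuous_snd)
    · exact ((continuous_const.sub (continuous_const.mul continuous_fst)).smul
        (A.continuous.comp (continuous_snd.sub continuous_const))).add
        (((continuous_const.mul continuous_fst).sub continuous_const).smul continuous_snd)
    · exact continuous_fst
    · exact continuous_const
    · intro q hq
      rw [hq]
      have h1 : (1 : ℝ) - 2 * (1/2) = 0 := by norm_num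
      rw [h1]
      have h2 : G (0, q.2) = A (q.2 - p) := by simp [hGdef]
      rw [h2]
      norm_num
  refine ⟨H, ⟨hHcont.continuousOn, ?_, ?_⟩, ?_, ?_⟩
  · -- gradient at each t
    intro t ht
    rcases le_or_gt t (1/2) with htle | htgt
    · rcases lt_or_eq_of_le htle with htlt | hteq
      · have hεne : (1 - 2*t) ≠ 0 := by intro h; apply absurd htlt; simp; linarith
        have hHt : H t = fun x => (1 - 2*t)⁻¹ • f (p + (1 - 2*t) • (x - p)) := by
          funext x
          rw [hHapp t x, if_pos htle, hGapp, if_neg hεne]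
        rw [hHt]
        exact stage1_isGradient hφ hgrad p (1 - 2*t) hεne
      · have hHt : H t = fun x => A (x - p) := by
          funext x
          rw [hHapp t x, if_pos htle, hGapp, if_pos (by rw [hteq]; norm_num)]
        rw [hHt]
        exact ⟨fun y => (1/2 : ℝ) * ⟪A (y - p), y - p⟫, quad_contDiff A p,
          fun x => (quad_hasGradient A hAsymm p x).gradient⟩
    · have hHt : H t = fun x => (2 - 2*t) • A (x - p) + (2*t - 1) • x := by
        funext x
        rw [hHapp t x, if_neg (not_le.mpr htgt)]
      rw [hHt]
      set B1 : Euc 2 →L[ℝ] Euc 2 := (2 - 2*t) • A with hB1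
      set B2 : Euc 2 →L[ℝ] Euc 2 := (2*t - 1) • ContinuousLinearMap.id ℝ (Euc 2) with hB2
      have hB1s : ∀ u v : Euc 2, ⟪B1 u, v⟫ = ⟪B1 v, u⟫ := by
        intro u v
        rw [hB1]
        simp only [ContinuousLinearMap.smul_apply]
        rw [real_inner_smul_left, real_inner_smul_left, hAsymm u v]
      have hB2s : ∀ u v : Euc 2, ⟪B2 u, v⟫ = ⟪B2 v, u⟫ := by
        intro u v
        rw [hB2]
        simp only [ContinuousLinearMap.smul_apply, ContinuousLinearMap.coe_id', id_eq]
        rw [real_inner_smul_left, real_inner_smul_left, real_inner_comm]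
      refine ⟨fun y => (1/2 : ℝ) * ⟪B1 (y - p), y - p⟫ + (1/2 : ℝ) * ⟪B2 (y - 0), y - 0⟫,
        (quad_contDiff B1 p).add (quad_contDiff B2 0), ?_⟩
      intro x
      have g1 := quad_hasGradient B1 hB1s p x
      have g2 := quad_hasGradient B2 hB2s 0 x
      have hadd := g1.hasFDerivAt.add g2.hasFDerivAt
      have hsum : HasGradientAt
          (fun y => (1/2 : ℝ) * ⟪B1 (y - p), y - p⟫ + (1/2 : ℝ) * ⟪B2 (y - 0), y - 0⟫)
          (B1 (x - p) + B2 (x - 0)) x := by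
        rw [hasGradientAt_iff_hasFDerivAt, map_add]
        exact hadd
      have hval : B1 (x - p) + B2 (x - 0) = (2 - 2*t) • A (x - p) + (2*t - 1) • x := by
        rw [hB1, hB2]
        simp only [ContinuousLinearMap.smul_apply, ContinuousLinearMap.coe_id', id_eq, sub_zero]
      rw [hsum.gradient, hval]
  · -- properness
    intro K hK
    obtain ⟨M₀, hM₀⟩ := hK.isBounded.subset_closedBall 0
    set M := max M₀ 1 with hMdef
    have hM1 : (1:ℝ) ≤ M := le_max_right _ _
    have hMpos : (0:ℝ) < M := lt_of_lt_of_le one_pos hM1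
    have hKM : K ⊆ closedBall 0 M :=
      subset_trans hM₀ (closedBall_subset_closedBall (le_max_left _ _))
    obtain ⟨R₀, hR₀pos, hR₀⟩ := preimage_bound hprop p M
    set R : ℝ := max (max (M/c) (max (2*M/c) (R₀*M/m))) ((M + ‖p‖) / min c 1) with hRdef
    have hbound : ∀ q : ℝ × Euc 2, q.1 ∈ Icc (0:ℝ) 1 → H q.1 q.2 ∈ K → ‖q.2 - p‖ ≤ R := by
      rintro ⟨t, x⟩ ⟨ht0, ht1⟩ hmem
      have hnorm : ‖H t x‖ ≤ M := by
        have := hKM hmem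
        rwa [mem_closedBall, dist_zero_right] at this
      rcases le_or_gt t (1/2) with htle | htgt
      · have hHt : H t x = if (1 - 2*t) = 0 then A (x - p)
            else (1 - 2*t)⁻¹ • f (p + (1 - 2*t) • (x - p)) := by
          rw [hHdef]
          simp only
          rw [if_pos htle, hGdef]
        rw [hHt] at hnorm
        have h1 := stage1_bound A hc hm hMpos hnormA hloc hoff hR₀ (1 - 2*t)
          (by linarith) (by linarith) x hnorm
        exact le_trans h1 (le_max_left _ _)
      · have hHt : H t x = (1 - (2*t - 1)) • A (x - p) + (2*t - 1) • x := by
          rw [hHapp t x, if_neg (not_le.mpr htgt)]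
          congr 2
          ring
        rw [hHt] at hnorm
        have h1 := stage2_bound A hc (le_of_lt hMpos) hcoer (2*t - 1)
          (by linarith) (by linarith) x hnorm
        exact le_trans h1 (le_max_right _ _)
    have hSclosed : IsClosed {q : ℝ × Euc 2 | q.1 ∈ Icc (0:ℝ) 1 ∧ H q.1 q.2 ∈ K} := by
      have h1 : IsClosed ((fun q : ℝ × Euc 2 => q.1) ⁻¹' (Icc (0:ℝ) 1)) :=
        isClosed_Icc.preimage continuous_fst
      have h2 : IsClosed ((fun q : ℝ × Euc 2 => H q.1 q.2) ⁻¹' K) :=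
        hK.isClosed.preimage hHcont
      exact h1.inter h2
    apply IsCompact.of_isClosed_subset ((isCompact_Icc).prod (isCompact_closedBall p R))
      hSclosed
    rintro ⟨t, x⟩ ⟨ht, hx⟩
    refine ⟨ht, ?_⟩
    rw [mem_closedBall, dist_eq_norm]
    exact hbound (t, x) ht hx
  · -- H 0 = f
    funext x
    rw [hHapp 0 x, if_pos (by norm_num : (0:ℝ) ≤ 1/2)]
    have h1 : (1 : ℝ) - 2 * 0 = 1 := by norm_num
    rw [h1, hGapp, if_neg (by norm_num : (1:ℝ) ≠ 0), inv_one, one_smul, one_smul]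
    have harg : p + (x - p) = x := by abel
    rw [harg]
  · -- H 1 = id
    funext x
    rw [hHapp 1 x, if_neg (by norm_num : ¬ (1:ℝ) ≤ 1/2)]
    norm_num

lemma neg_transfer {f : Euc 2 → Euc 2}
    (h : ProperGradientHomotopic (fun x : Euc 2 => -f x) (id : Euc 2 → Euc 2)) :
    ProperGradientHomotopic f (fun x : Euc 2 => -x) := by
  obtain ⟨H, ⟨Hc, Hg, Hp⟩, h0, h1⟩ := h
  refine ⟨fun t x => -(H t x), ⟨Hc.neg, ?_, ?_⟩, ?_, ?_⟩
  · intro t ht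
    obtain ⟨ψ, hψ, hgr⟩ := Hg t ht
    refine ⟨fun y => -ψ y, hψ.neg, ?_⟩
    intro x
    rw [gradient_neg' hψ x, hgr x]
  · intro K hK
    have hs : {q : ℝ × Euc 2 | q.1 ∈ Icc (0:ℝ) 1 ∧ -(H q.1 q.2) ∈ K}
        = {q : ℝ × Euc 2 | q.1 ∈ Icc (0:ℝ) 1 ∧ H q.1 q.2 ∈ (fun y : Euc 2 => -y) '' K} := by
      ext q
      simp only [mem_setOf_eq, and_congr_right_iff]
      intro _
      constructor
      · intro hk
        exact ⟨-(H q.1 q.2), hk, by simp⟩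
      · rintro ⟨a, ha, hax⟩
        have : a = -(H q.1 q.2) := by
          have : -a = H q.1 q.2 := hax
          rw [← this, neg_neg]
        rwa [this] at ha
    rw [hs]
    exact Hp _ (hK.image continuous_neg)
  · funext x
    show -(H 0 x) = f x
    have := congrFun h0 x
    rw [this, neg_neg]
  · funext x
    show -(H 1 x) = -x
    have := congrFun h1 x
    rw [this]
    rfl

end SZ

/-- if `f = ∇φ` is a generic proper gradient map on `ℝ²` whose zero set is the
single point `p`, then `f` is proper gradient homotopic to `id` if `p` is a source, and to
`-id` if `p` is a sink. -/
theorem generic_single_zero_homotopic_id_or_neg (φ : Euc 2 → ℝ) (f : Euc 2 → Euc 2)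
    (hgen : IsGenericGradientPair φ f) (hprop : IsProper f) (p : Euc 2)
    (hzero : f ⁻¹' {0} = {p}) :
    (IsSourceAt f p → ProperGradientHomotopic f (id : Euc 2 → Euc 2)) ∧
    (IsSinkAt f p → ProperGradientHomotopic f (fun x : Euc 2 => -x)) := by
  obtain ⟨hφ2, hgrad, _, _, _⟩ := hgen
  constructor
  · intro hsrc
    exact SZ.source_case hφ2 hgrad hprop hzero hsrc
  · intro hsink
    obtain ⟨hfp, hneg⟩ := hsink
    have hgrad' : ∀ x, gradient (fun y => -φ y) x = (fun x : Euc 2 => -f x) x := by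
      intro x
      rw [SZ.gradient_neg' (hφ2.of_le one_le_two) x, hgrad x]
    have hprop' : IsProper (fun x : Euc 2 => -f x) := by
      intro K hK
      have heq : (fun x : Euc 2 => -f x) ⁻¹' K = f ⁻¹' ((fun y : Euc 2 => -y) '' K) := by
        ext x
        simp only [mem_preimage, mem_image]
        constructor
        · intro h; exact ⟨-f x, h, by simp⟩
        · rintro ⟨a, ha, hax⟩
          have : a = -f x := by
            have h2 : -a = f x := hax
            rw [← h2, neg_neg]
          rwa [this] at ha
      rw [heq]
      exact hprop _ (hK.image continuous_neg)
    have hzero' : (fun x : Euc 2 => -f x) ⁻¹' {0} = {p} := by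
      rw [← hzero]
      ext x
      simp [neg_eq_zero]
    have hsrc' : IsSourceAt (fun x : Euc 2 => -f x) p := by
      refine ⟨by simp [hfp], ?_⟩
      intro v hv
      have hfd : fderiv ℝ (fun x : Euc 2 => -f x) p = -fderiv ℝ f p := fderiv_neg
      rw [hfd]
      simp only [ContinuousLinearMap.neg_apply, inner_neg_left]
      linarith [hneg v hv]
    exact SZ.neg_transfer (SZ.source_case (hφ2.neg) hgrad' hprop' hzero' hsrc')
end
end

section
/- Let f : ℝ² → ℝ² be a continuous map which is differentiable at 0 with f(0) = 0, and let Df_0 denote its derivative at 0. Define h : [0,1] × ℝ² → ℝ² by h(t,x) = f(tx)/t for t ≠ 0 and h(0,x) = Df_0(x). If Df_0 is nonsingular, f is proper, and f⁻¹(0) = {0}, then h is a proper map; that is, preimages of compact sets under h are compact. -/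
open Set Metric

noncomputable section

/-- let `f : ℝ² → ℝ²` be continuous, differentiable at `0`, `f 0 = 0`, with
nonsingular derivative `Df₀`, `f` proper and `f⁻¹(0) = {0}`.  Then the Milnor-trick
homotopy `h(t,x) = f(tx)/t` (`t ≠ 0`), `h(0,x) = Df₀(x)`, is proper on `[0,1] × ℝ²`:
preimages of compact sets are compact. -/
theorem milnor_trick_proper (f : Euc 2 → Euc 2) (Df : Euc 2 →L[ℝ] Euc 2)
    (hf : Continuous f) (hf0 : f 0 = 0) (hdf : HasFDerivAt f Df 0)
    (hreg : Function.Bijective Df)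
    (hproper : ∀ K : Set (Euc 2), IsCompact K → IsCompact (f ⁻¹' K))
    (hzero : f ⁻¹' {0} = {0}) :
    ∀ K : Set (Euc 2), IsCompact K →
      IsCompact {p : ℝ × Euc 2 | p.1 ∈ Icc (0:ℝ) 1 ∧
        (if p.1 = 0 then Df p.2 else p.1⁻¹ • f (p.1 • p.2)) ∈ K} := by
  intro K hK
  set h : ℝ × Euc 2 → Euc 2 :=
    fun p => if p.1 = 0 then Df p.2 else p.1⁻¹ • f (p.1 • p.2) with hh
  -- little-o estimate from differentiability
  have hlo : (fun y => f y - Df y) =o[nhds (0 : Euc 2)] fun y => y := by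
    simpa [hf0] using hdf.isLittleO
  have hloε : ∀ ε : ℝ, 0 < ε → ∃ δ > 0, ∀ y : Euc 2, ‖y‖ < δ →
      ‖f y - Df y‖ ≤ ε * ‖y‖ := by
    intro ε hε
    have H := (Asymptotics.isLittleO_iff.mp hlo hε)
    rw [Metric.eventually_nhds_iff] at H
    obtain ⟨δ, hδ, H⟩ := H
    exact ⟨δ, hδ, fun y hy => by simpa using H (by simpa [dist_eq_norm] using hy)⟩
  -- antilipschitz bound for Df
  have hbound : ∃ C > 0, ∀ x : Euc 2, ‖x‖ ≤ C * ‖Df x‖ := by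
    have hreg' : Function.Bijective (Df : Euc 2 →ₗ[ℝ] Euc 2) := hreg
    let e := LinearEquiv.ofBijective (Df : Euc 2 →ₗ[ℝ] Euc 2) hreg'
    let g := LinearMap.toContinuousLinearMap (e.symm : Euc 2 →ₗ[ℝ] Euc 2)
    refine ⟨‖g‖ + 1, by positivity, fun x => ?_⟩
    have hx : g (Df x) = x := e.symm_apply_apply x
    calc ‖x‖ = ‖g (Df x)‖ := by rw [hx]
      _ ≤ ‖g‖ * ‖Df x‖ := g.le_opNorm _
      _ ≤ (‖g‖ + 1) * ‖Df x‖ := by nlinarith [norm_nonneg (Df x), norm_nonneg g]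
  obtain ⟨C, hC, hCb⟩ := hbound
  -- continuity of h
  have hcont : Continuous h := by
    rw [continuous_iff_continuousAt]
    rintro ⟨t₀, x₀⟩
    rcases eq_or_ne t₀ 0 with rfl | hne
    · have hval : h (0, x₀) = Df x₀ := by simp [hh]
      rw [ContinuousAt, hval, Metric.tendsto_nhds]
      intro ε hε
      set B : ℝ := ‖x₀‖ + 1 with hB
      have hBpos : 0 < B := by positivity
      obtain ⟨δ₁, hδ₁pos, hδ₁⟩ := hloε (ε / (4 * B)) (by positivity)
      obtain ⟨δ₂, hδ₂pos, hδ₂⟩ :=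
        Metric.continuousAt_iff.mp Df.continuous.continuousAt (ε / 2) (half_pos hε)
      set a : ℝ := δ₁ / B with ha
      have hapos : 0 < a := by positivity
      have h1 : ∀ᶠ p : ℝ × Euc 2 in nhds ((0 : ℝ), x₀), |p.1| < a := by
        have hb : ∀ᶠ t : ℝ in nhds (0 : ℝ), |t| < a := by
          filter_upwards [Metric.ball_mem_nhds (0 : ℝ) hapos] with t ht
          simpa [Real.dist_eq] using ht
        exact (continuous_fst.tendsto ((0 : ℝ), x₀)).eventually hb
      have h2 : ∀ᶠ p : ℝ × Euc 2 in nhds ((0 : ℝ), x₀), dist p.2 x₀ < min 1 δ₂ := by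
        have hb : ∀ᶠ x : Euc 2 in nhds x₀, dist x x₀ < min 1 δ₂ := by
          filter_upwards [Metric.ball_mem_nhds x₀ (lt_min one_pos hδ₂pos)] with x hx
          exact hx
        exact (continuous_snd.tendsto ((0 : ℝ), x₀)).eventually hb
      filter_upwards [h1, h2] with p hp1 hp2
      obtain ⟨t, x⟩ := p
      simp only at hp1 hp2
      have hxB : ‖x‖ ≤ B := by
        have h3 : ‖x - x₀‖ ≤ 1 := by
          have := hp2.trans_le (min_le_left 1 δ₂)
          rw [dist_eq_norm] at this
          linarith
        have h4 : ‖x‖ ≤ ‖x - x₀‖ + ‖x₀‖ := by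
          simpa using norm_add_le (x - x₀) x₀
        rw [hB]; linarith
      have hDfx : dist (Df x) (Df x₀) < ε / 2 :=
        hδ₂ (hp2.trans_le (min_le_right 1 δ₂))
      by_cases ht : t = 0
      · have hv : h (t, x) = Df x := by simp [hh, ht]
        rw [hv]
        linarith
      · have hv : h (t, x) = t⁻¹ • f (t • x) := by simp [hh, ht]
        rw [hv]
        have key : t⁻¹ • f (t • x) - Df x = t⁻¹ • (f (t • x) - Df (t • x)) := by
          rw [smul_sub]
          congr 1
          rw [Df.map_smul, smul_smul, inv_mul_cancel₀ ht, one_smul]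
        have htx : ‖t • x‖ < δ₁ := by
          rw [norm_smul, Real.norm_eq_abs]
          calc |t| * ‖x‖ ≤ |t| * B := mul_le_mul_of_nonneg_left hxB (abs_nonneg t)
            _ < a * B := mul_lt_mul_of_pos_right hp1 hBpos
            _ = δ₁ := by rw [ha]; field_simp
        have habs : 0 < |t| := abs_pos.2 ht
        have hest : ‖f (t • x) - Df (t • x)‖ ≤ ε / (4 * B) * (|t| * ‖x‖) := by
          have := hδ₁ _ htx
          rwa [norm_smul, Real.norm_eq_abs] at this
        have hA : ‖t⁻¹ • f (t • x) - Df x‖ ≤ ε / 4 := by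
          rw [key, norm_smul, norm_inv, Real.norm_eq_abs]
          calc |t|⁻¹ * ‖f (t • x) - Df (t • x)‖
              ≤ |t|⁻¹ * (ε / (4 * B) * (|t| * ‖x‖)) :=
                mul_le_mul_of_nonneg_left hest (by positivity)
            _ = ε / (4 * B) * ‖x‖ := by field_simp
            _ ≤ ε / (4 * B) * B := mul_le_mul_of_nonneg_left hxB (by positivity)
            _ = ε / 4 := by field_simp
        have htri : dist (t⁻¹ • f (t • x)) (Df x₀) ≤
            ‖t⁻¹ • f (t • x) - Df x‖ + dist (Df x) (Df x₀) := by
          have := dist_triangle (t⁻¹ • f (t • x)) (Df x) (Df x₀)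
          rwa [dist_eq_norm (t⁻¹ • f (t • x))] at this
        linarith
    · have hev : h =ᶠ[nhds (t₀, x₀)] fun p : ℝ × Euc 2 => p.1⁻¹ • f (p.1 • p.2) := by
        have hm : {p : ℝ × Euc 2 | p.1 ≠ 0} ∈ nhds (t₀, x₀) :=
          (isOpen_ne.preimage continuous_fst).mem_nhds hne
        filter_upwards [hm] with p hp
        simp [hh, hp]
      refine ContinuousAt.congr ?_ hev.symm
      exact (continuousAt_fst.inv₀ hne).smul
        (hf.continuousAt.comp (continuousAt_fst.smul continuousAt_snd))
  -- now prove compactness: closed and bounded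
  rw [Metric.isCompact_iff_isClosed_bounded]
  constructor
  · have hset : {p : ℝ × Euc 2 | p.1 ∈ Icc (0:ℝ) 1 ∧
        (if p.1 = 0 then Df p.2 else p.1⁻¹ • f (p.1 • p.2)) ∈ K} =
        (Prod.fst ⁻¹' Icc (0:ℝ) 1) ∩ h ⁻¹' K := rfl
    rw [hset]
    exact (isClosed_Icc.preimage continuous_fst).inter (hK.isClosed.preimage hcont)
  · obtain ⟨R, hRpos, hR⟩ := hK.isBounded.subset_closedBall_lt 0 0
    set K' : Set (Euc 2) := (fun p : ℝ × Euc 2 => p.1 • p.2) '' (Icc (0:ℝ) 1 ×ˢ K)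
      with hK'def
    have hK'c : IsCompact K' :=
      (isCompact_Icc.prod hK).image (continuous_fst.smul continuous_snd)
    obtain ⟨M, hM⟩ := (hproper K' hK'c).isBounded.subset_closedBall 0
    -- key lower bound on the ball of radius M
    have hkey : ∃ c > 0, ∀ y : Euc 2, ‖y‖ ≤ M → c * ‖y‖ ≤ ‖f y‖ := by
      obtain ⟨δ, hδpos, hδ⟩ := hloε (1 / (2 * C)) (by positivity)
      have hsmall : ∀ y : Euc 2, ‖y‖ < δ → (1 / (2 * C)) * ‖y‖ ≤ ‖f y‖ := by
        intro y hy
        have h1 := hCb y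
        have h2 := hδ y hy
        have h3 : ‖Df y‖ ≤ ‖f y‖ + ‖f y - Df y‖ := by
          have heq : Df y = f y - (f y - Df y) := by abel
          calc ‖Df y‖ = ‖f y - (f y - Df y)‖ := by rw [← heq]
            _ ≤ ‖f y‖ + ‖f y - Df y‖ := norm_sub_le _ _
        have h5 : ‖y‖ / 2 ≤ C * ‖f y‖ := by
          have h4 : C * ((1 / (2 * C)) * ‖y‖) = ‖y‖ / 2 := by field_simp
          nlinarith [norm_nonneg y, norm_nonneg (f y)]
        calc (1 / (2 * C)) * ‖y‖ = (‖y‖ / 2) / C := by ring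
          _ ≤ (C * ‖f y‖) / C := by apply div_le_div_of_nonneg_right h5 hC.le
          _ = ‖f y‖ := by field_simp
      set A : Set (Euc 2) := closedBall 0 M ∩ {y | δ ≤ ‖y‖} with hAdef
      rcases A.eq_empty_or_nonempty with hAe | hAne
      · refine ⟨1 / (2 * C), by positivity, fun y hy => ?_⟩
        have hlt : ‖y‖ < δ := by
          by_contra hcon
          have hmem : y ∈ A :=
            ⟨by simpa [mem_closedBall, dist_eq_norm] using hy, le_of_not_gt hcon⟩
          rw [hAe] at hmem
          exact hmem
        exact hsmall y hlt
      · have hAc : IsCompact A := (isCompact_closedBall (0 : Euc 2) M).inter_right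
          (isClosed_le continuous_const continuous_norm)
        obtain ⟨y₀, hy₀A, hy₀min⟩ := hAc.exists_isMinOn hAne hf.norm.continuousOn
        have hy₀pos : 0 < ‖f y₀‖ := by
          obtain ⟨_, hδy⟩ := hy₀A
        
          have hy₀ne : y₀ ≠ 0 := by
            intro h0
            rw [h0] at hδy
            simp at hδy
            linarith
          have hfne : f y₀ ≠ 0 := by
            intro hc
            have : y₀ ∈ f ⁻¹' {0} := by simp [hc]
            rw [hzero] at this
            exact hy₀ne this
          exact norm_pos_iff.2 hfne
        have hM0 : 0 ≤ M := by
          obtain ⟨z, hz, _⟩ := hAne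
          exact le_trans (norm_nonneg z) (by simpa [mem_closedBall, dist_eq_norm] using hz)
        refine ⟨min (1 / (2 * C)) (‖f y₀‖ / (M + 1)), lt_min (by positivity) (by positivity),
          fun y hy => ?_⟩
        by_cases hyd : ‖y‖ < δ
        · calc min (1 / (2 * C)) (‖f y₀‖ / (M + 1)) * ‖y‖
              ≤ (1 / (2 * C)) * ‖y‖ :=
                mul_le_mul_of_nonneg_right (min_le_left _ _) (norm_nonneg y)
            _ ≤ ‖f y‖ := hsmall y hyd
        · have hyA : y ∈ A :=
            ⟨by simpa [mem_closedBall, dist_eq_norm] using hy, le_of_not_gt hyd⟩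
          have h5 : ‖f y₀‖ ≤ ‖f y‖ := hy₀min hyA
          calc min (1 / (2 * C)) (‖f y₀‖ / (M + 1)) * ‖y‖
              ≤ (‖f y₀‖ / (M + 1)) * ‖y‖ :=
                mul_le_mul_of_nonneg_right (min_le_right _ _) (norm_nonneg y)
            _ ≤ (‖f y₀‖ / (M + 1)) * (M + 1) :=
                mul_le_mul_of_nonneg_left (by linarith) (by positivity)
            _ = ‖f y₀‖ := by field_simp
            _ ≤ ‖f y‖ := h5
    obtain ⟨c, hc, hcb⟩ := hkey
    set D := max (R / c) (C * R) with hD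
    apply Bornology.IsBounded.subset
      ((Metric.isBounded_Icc (0:ℝ) 1).prod (isBounded_closedBall (x := (0 : Euc 2)) (r := D)))
    rintro ⟨t, x⟩ ⟨htI, hKmem⟩
    refine ⟨htI, ?_⟩
    simp only [mem_closedBall, dist_zero_right]
    by_cases ht : t = 0
    · simp only [ht, if_pos rfl] at hKmem
      have hDfR : ‖Df x‖ ≤ R := by
        have := hR hKmem
        simpa [mem_closedBall, dist_eq_norm] using this
      calc ‖x‖ ≤ C * ‖Df x‖ := hCb x
        _ ≤ C * R := mul_le_mul_of_nonneg_left hDfR hC.le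
        _ ≤ D := le_max_right _ _
    · simp only [if_neg ht] at hKmem
      have ht0 : 0 < t := lt_of_le_of_ne htI.1 (Ne.symm ht)
      have hmem' : f (t • x) ∈ K' := by
        have heq : f (t • x) = t • (t⁻¹ • f (t • x)) := by
          rw [smul_smul, mul_inv_cancel₀ ht, one_smul]
        rw [heq, hK'def]
        exact ⟨(t, t⁻¹ • f (t • x)), ⟨htI, hKmem⟩, rfl⟩
      have htxM : ‖t • x‖ ≤ M := by
        have := hM hmem'
        simpa [mem_closedBall, dist_eq_norm] using this
      have hlow := hcb (t • x) htxM
      have hfk : ‖f (t • x)‖ ≤ t * R := by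
        have hk : ‖t⁻¹ • f (t • x)‖ ≤ R := by
          have := hR hKmem
          simpa [mem_closedBall, dist_eq_norm] using this
        have heq : ‖f (t • x)‖ = t * ‖t⁻¹ • f (t • x)‖ := by
          rw [norm_smul, Real.norm_eq_abs, abs_inv, abs_of_pos ht0]
          field_simp
        rw [heq]
        exact mul_le_mul_of_nonneg_left hk ht0.le
      have h6 : ‖t • x‖ = t * ‖x‖ := by
        rw [norm_smul, Real.norm_eq_abs, abs_of_pos ht0]
      rw [h6] at hlow
      have h8 : c * (t * ‖x‖) ≤ t * R := hlow.trans hfk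
      have h8' : t * (c * ‖x‖) ≤ t * R := by
        rw [show t * (c * ‖x‖) = c * (t * ‖x‖) from by ring]; exact h8
      have h9 : c * ‖x‖ ≤ R := (mul_le_mul_iff_right₀ ht0).mp h8'
      have h7 : ‖x‖ ≤ R / c := by rw [le_div_iff₀ hc]; linarith
      exact le_trans h7 (le_max_left _ _)
end
end
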